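/- Let G and H be abelian groups, p a prime, and M ⊆ G × H a subgroup. Suppose the natural map M/M^p → G/G^p (induced by projection to G, where N^p denotes the subgroup of p-th powers) is injective. Then the restriction map Hom((G × H)/M, μ_p) → Hom(H, μ_p), induced by h ↦ (0, h), is surjective. -/

import Mathlib

/-- (Klagsbrun–Mazur–Rubin, Lemma 6.6(ii).)  Let `G`, `H` be abelian groups,
`p` a prime, and `M ⊆ G × H` a subgroup.  If the natural map `M/M^p → G/G^p` is injective
(i.e. any `m ∈ M` whose first coordinate is a `p`-th power in `G` is a `p`-th power in `M`),
then the restriction map `Hom((G × H)/M, μ_p) → Hom(H, μ_p)` is surjective. -/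
theorem statement19 (p : ℕ) (hp : p.Prime) (G H : Type) [CommGroup G] [CommGroup H]
    (M : Subgroup (G × H))
    (hinj : ∀ m ∈ M, (∃ g : G, g ^ p = m.1) → ∃ m' ∈ M, m' ^ p = m) :
    ∀ χ : H →* rootsOfUnity p ℂ,
      ∃ ψ : (G × H) ⧸ M →* rootsOfUnity p ℂ,
        ∀ h : H, ψ (QuotientGroup.mk (1, h)) = χ h := by
  intro χ
  haveI : Fact p.Prime := ⟨hp⟩
  haveI : NeZero p := ⟨hp.ne_zero⟩
  set Q := (G × H) ⧸ M with hQ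
  set P : Subgroup Q := (powMonoidHom p : Q →* Q).range with hP
  set Q1 := Q ⧸ P with hQ1
  -- torsion of μ_p
  have hμtor : ∀ x : rootsOfUnity p ℂ, x ^ p = 1 := by
    intro x
    have hx : (x : ℂˣ) ^ p = 1 := (mem_rootsOfUnity p _).mp x.2
    ext
    exact_mod_cast hx
  -- Q1 is p-torsion
  have hQ1tor : ∀ x : Q1, x ^ p = 1 := by
    intro x
    obtain ⟨q, rfl⟩ := QuotientGroup.mk_surjective x
    rw [← QuotientGroup.mk_pow]
    rw [QuotientGroup.eq_one_iff]
    exact ⟨q, rfl⟩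
  -- the map f : H →* Q1
  set f : H →* Q1 :=
    (QuotientGroup.mk' P).comp ((QuotientGroup.mk' M).comp (MonoidHom.inr G H)) with hf
  -- kernel condition
  have hker : ∀ h : H, f h = 1 → χ h = 1 := by
    intro h hfh
    have : (QuotientGroup.mk ((1 : G), h) : Q) ∈ P := by
      rwa [← QuotientGroup.eq_one_iff] at *
    obtain ⟨q, hq⟩ := this
    obtain ⟨⟨g, k⟩, rfl⟩ := QuotientGroup.mk_surjective q
    have hq' : (QuotientGroup.mk (((g, k) : G × H) ^ p) : Q) = QuotientGroup.mk (1, h) := by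
      simp only [powMonoidHom_apply] at hq
      rw [← QuotientGroup.mk_pow] at hq
      exact hq
    have hm : (((g, k) : G × H) ^ p)⁻¹ * (1, h) ∈ M := QuotientGroup.eq.mp hq'
    obtain ⟨m', hm'M, hm'⟩ := hinj _ hm ⟨g⁻¹, by simp⟩
    have h2 : m'.2 ^ p = (k ^ p)⁻¹ * h := by
      have := congrArg Prod.snd hm'
      simpa using this
    have hh : h = (k * m'.2) ^ p := by
      rw [mul_pow, h2]
      group
    rw [hh, map_pow, hμtor]
  -- build χbar on the range of f
  set χbar : (f.range : Subgroup Q1) →* rootsOfUnity p ℂ :=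
    (QuotientGroup.lift f.ker χ (fun x hx => hker x hx)).comp
      (QuotientGroup.quotientKerEquivRange f).symm.toMonoidHom with hχbar
  have hχbar_apply : ∀ h : H, χbar ⟨f h, ⟨h, rfl⟩⟩ = χ h := by
    intro h
    have h1 : (QuotientGroup.quotientKerEquivRange f).symm ⟨f h, ⟨h, rfl⟩⟩
        = QuotientGroup.mk h := by
      rw [MulEquiv.symm_apply_eq]
      rfl
    rw [hχbar]
    simp only [MonoidHom.comp_apply, MulEquiv.coe_toMonoidHom, h1]
    rfl
  -- module structures
  haveI : Module (ZMod p) (Additive Q1) :=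
    AddCommGroup.zmodModule (n := p) (G := Additive Q1) (by
      intro x
      show Additive.ofMul ((Additive.toMul x) ^ p) = 0
      rw [hQ1tor]
      rfl)
  haveI : Module (ZMod p) (Additive (rootsOfUnity p ℂ)) :=
    AddCommGroup.zmodModule (n := p) (G := Additive (rootsOfUnity p ℂ)) (by
      intro x
      show Additive.ofMul ((Additive.toMul x) ^ p) = 0
      rw [hμtor]
      rfl)
  set S : Submodule (ZMod p) (Additive Q1) :=
    AddSubgroup.toZModSubmodule p (M := Additive Q1) (Subgroup.toAddSubgroup f.range) with hS
  set χA : S →+ Additive (rootsOfUnity p ℂ) :=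
    { toFun := fun x => Additive.ofMul (χbar ⟨Additive.toMul x.1, x.2⟩),
      map_zero' := congrArg Additive.ofMul (map_one χbar)
      map_add' := fun x y => congrArg Additive.ofMul
        (map_mul χbar ⟨Additive.toMul x.1, x.2⟩ ⟨Additive.toMul y.1, y.2⟩) } with hχA
  letI : CommGroup Q1 := QuotientGroup.Quotient.commGroup P
  obtain ⟨gl, hgl⟩ := LinearMap.exists_extend (AddMonoidHom.toZModLinearMap p (M := S) (M₁ := Additive (rootsOfUnity p ℂ)) χA)
  set ga : Additive Q1 →+ Additive (rootsOfUnity p ℂ) := gl.toAddMonoidHom with hga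
  set ψ0 : Q1 →* rootsOfUnity p ℂ := MonoidHom.toAdditive.symm ga with hψ0
  set ψ : Q →* rootsOfUnity p ℂ := ψ0.comp (QuotientGroup.mk' P) with hψ
  refine ⟨ψ, fun h => ?_⟩
  have hmem : Additive.ofMul (f h) ∈ S := by
    show f h ∈ f.range
    exact ⟨h, rfl⟩
  show Additive.toMul (ga (Additive.ofMul (f h))) = χ h
  have key : ga (Additive.ofMul (f h)) = χA ⟨Additive.ofMul (f h), hmem⟩ :=
    congrArg (fun m : S →ₗ[ZMod p] Additive (rootsOfUnity p ℂ) =>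
      m.toAddHom.toFun ⟨Additive.ofMul (f h), hmem⟩) hgl
  rw [key]
  show Additive.toMul (Additive.ofMul (χbar ⟨f h, ⟨h, rfl⟩⟩)) = χ h
  exact hχbar_apply h
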